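/- arXiv:2111.06362 — 4 statements merged into one kernel-verified Lean document; each statement's English description precedes it below -/
import Mathlib

section
/- In a finite metric space, if a greedy procedure repeatedly selects a point p maximizing the weight of uncovered points within distance r and removes all uncovered points within distance γr of p (with γ ≥ 1), then any two distinct selected points are at distance strictly greater than (γ−1)·r from each other. -/
open scoped Classical

/-- One execution of the greedy clustering procedure on a finite metric space:
`GreedyExec r γ ω U L` holds when, starting from the set `U` of uncovered points,
the greedy procedure (repeatedly pick `p ∈ X` maximizing the `ω`-weight of the
uncovered points within distance `r` of `p`, then remove all uncovered points
within distance `γ * r` of `p` as the cluster of `p`) can produce the list `L`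
of (center, cluster) pairs. -/
inductive GreedyExec {X : Type*} [MetricSpace X] (r γ : ℝ) (ω : X → ℕ) :
    Finset X → List (X × Finset X) → Prop
  | nil : GreedyExec r γ ω ∅ []
  | cons (U : Finset X) (p : X) (L : List (X × Finset X))
      (hU : U.Nonempty)
      (hp : (U.filter fun y => dist y p ≤ r).Nonempty)
      (hmax : ∀ q : X, (U.filter fun y => dist y q ≤ r).Nonempty →
        ∑ y ∈ U.filter (fun y => dist y q ≤ r), ω y ≤
          ∑ y ∈ U.filter (fun y => dist y p ≤ r), ω y)
      (hrest : GreedyExec r γ ω (U \ U.filter fun y => dist y p ≤ γ * r) L) :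
      GreedyExec r γ ω U ((p, U.filter fun y => dist y p ≤ γ * r) :: L)

/-- Every center selected during an execution has a witness in the initial
uncovered set within distance `r`. -/
lemma greedy_center_witness {X : Type*} [MetricSpace X] {r γ : ℝ} {ω : X → ℕ}
    {U : Finset X} {L : List (X × Finset X)} (hexec : GreedyExec r γ ω U L) :
    ∀ q ∈ L.map Prod.fst, ∃ y ∈ U, dist y q ≤ r := by
  induction hexec with
  | nil => simp
  | cons U p L hU hp hmax hrest ih =>
    intro q hq
    simp only [List.map_cons, List.mem_cons] at hq
    rcases hq with rfl | hq
    · obtain ⟨y, hy⟩ := hp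
      simp only [Finset.mem_filter] at hy
      exact ⟨y, hy.1, hy.2⟩
    · obtain ⟨y, hy, hyd⟩ := ih q hq
      exact ⟨y, (Finset.sdiff_subset hy), hyd⟩

/-- Any two distinct centers selected by the greedy clustering procedure are at
distance strictly greater than `(γ - 1) * r` from each other. -/
theorem greedy_centers_separated {X : Type*} [MetricSpace X] {r γ : ℝ}
    (hr : 0 ≤ r) (hγ : 1 ≤ γ) (ω : X → ℕ) (Y : Finset X)
    (L : List (X × Finset X)) (hexec : GreedyExec r γ ω Y L) :
    ∀ p ∈ L.map Prod.fst, ∀ q ∈ L.map Prod.fst, p ≠ q → (γ - 1) * r < dist p q := by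
  induction hexec with
  | nil => simp
  | cons U p L hU hp hmax hrest ih =>
    have key : ∀ q ∈ L.map Prod.fst, (γ - 1) * r < dist p q := by
      intro q hq
      obtain ⟨y, hy, hyd⟩ := greedy_center_witness hrest q hq
      rw [Finset.mem_sdiff, Finset.mem_filter] at hy
      have hyp : γ * r < dist y p := by
        by_contra h
        exact hy.2 ⟨hy.1, le_of_not_gt h⟩
      have htri : dist y p ≤ dist y q + dist q p := dist_triangle y q p
      have : γ * r - r < dist q p := by linarith
      have : (γ - 1) * r < dist q p := by linarith [sub_one_mul γ r]
      rwa [dist_comm]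
    intro a ha b hb hab
    simp only [List.map_cons, List.mem_cons] at ha hb
    rcases ha with rfl | ha <;> rcases hb with rfl | hb
    · exact absurd rfl hab
    · exact key b hb
    · rw [dist_comm]; exact key a ha
    · exact ih a ha b hb hab
end

section
/- (Charikar et al. greedy domination lemma) Suppose greedy clustering is run with expansion parameter γ ≥ 3. For any collection B of k ≥ 1 balls of radius r centered at points of X, the total weight of the first k' = min{k, |M|} greedy clusters is at least the total ω-weight of the points of Y covered by the balls in B. -/
open scoped Classical

private lemma sum_union_le' {α : Type*} (s t : Finset α) (f : α → ℕ) :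
    ∑ i ∈ s ∪ t, f i ≤ ∑ i ∈ s, f i + ∑ i ∈ t, f i := by
  have := Finset.sum_union_inter (s₁ := s) (s₂ := t) (f := f)
  omega

private lemma greedy_key {X : Type*} [MetricSpace X] {r γ : ℝ}
    (hr : 0 ≤ r) (hγ : 3 ≤ γ) (ω : X → ℕ) {Y : Finset X}
    {L : List (X × Finset X)} (hexec : GreedyExec r γ ω Y L) :
    ∀ Cs : Finset X,
    ∑ y ∈ Y.filter (fun y => ∃ c ∈ Cs, dist y c ≤ r), ω y ≤
      ((L.take (min Cs.card L.length)).map fun pc => ∑ y ∈ pc.2, ω y).sum := by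
  induction hexec with
  | nil => simp
  | cons U p L hU hp hmax hrest ih =>
    intro Cs
    rcases Cs.eq_empty_or_nonempty with rfl | ⟨c₀, hc₀⟩
    · simp
    set C := U.filter (fun y => dist y p ≤ γ * r) with hC
    set Bp := U.filter (fun y => dist y p ≤ r) with hBp
    have hrγ : r ≤ γ * r := by nlinarith
    have hBpC : Bp ⊆ C := by
      intro y hy
      rw [hBp, Finset.mem_filter] at hy
      rw [hC, Finset.mem_filter]
      exact ⟨hy.1, hy.2.trans hrγ⟩
    -- key step inequality
    have key : ∃ c ∈ Cs,
        ∑ y ∈ U.filter (fun y => ∃ c' ∈ Cs, dist y c' ≤ r), ω y ≤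
          (∑ y ∈ C, ω y) +
            ∑ y ∈ (U \ C).filter (fun y => ∃ c' ∈ Cs.erase c, dist y c' ≤ r), ω y := by
      by_cases hcase : ∃ c ∈ Cs, U.filter (fun y => dist y c ≤ r) ⊆ C
      · -- Case 1: some ball entirely inside the expanded cluster
        obtain ⟨c, hcCs, hball⟩ := hcase
        refine ⟨c, hcCs, ?_⟩
        have hsub : U.filter (fun y => ∃ c' ∈ Cs, dist y c' ≤ r) ⊆
            C ∪ (U \ C).filter (fun y => ∃ c' ∈ Cs.erase c, dist y c' ≤ r) := by
          intro y hy
          rw [Finset.mem_filter] at hy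
          obtain ⟨hyU, c', hc', hd⟩ := hy
          by_cases hyC : y ∈ C
          · exact Finset.mem_union_left _ hyC
          · refine Finset.mem_union_right _ ?_
            rw [Finset.mem_filter, Finset.mem_sdiff]
            refine ⟨⟨hyU, hyC⟩, c', ?_, hd⟩
            refine Finset.mem_erase.2 ⟨?_, hc'⟩
            rintro rfl
            exact hyC (hball (Finset.mem_filter.2 ⟨hyU, hd⟩))
        exact (Finset.sum_le_sum_of_subset hsub).trans (sum_union_le' _ _ _)
      · -- Case 2: no ball entirely inside the cluster
        push_neg at hcase
        -- then no ball touches Bp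
        have hdisj : ∀ c ∈ Cs, ∀ y ∈ U, dist y c ≤ r → ¬ dist y p ≤ r := by
          intro c hc y hyU hyc hyp
          refine hcase c hc ?_
          intro z hz
          rw [Finset.mem_filter] at hz
          rw [hC, Finset.mem_filter]
          refine ⟨hz.1, ?_⟩
          have h1 : dist z p ≤ dist z c + dist c y + dist y p := dist_triangle4 z c y p
          have h2 : dist c y = dist y c := dist_comm c y
          nlinarith [hz.2]
        refine ⟨c₀, hc₀, ?_⟩
        set S := U.filter (fun y => ∃ c' ∈ Cs, dist y c' ≤ r) with hS
        set S' := (U \ C).filter (fun y => ∃ c' ∈ Cs.erase c₀, dist y c' ≤ r) with hS'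
        set B0 := U.filter (fun y => dist y c₀ ≤ r) with hB0
        have hsub : S ⊆ (S ∩ C) ∪ (B0 ∪ S') := by
          intro y hy
          by_cases hyC : y ∈ C
          · exact Finset.mem_union_left _ (Finset.mem_inter.2 ⟨hy, hyC⟩)
          rw [hS, Finset.mem_filter] at hy
          obtain ⟨hyU, c', hc', hd⟩ := hy
          refine Finset.mem_union_right _ ?_
          by_cases hcc : c' = c₀
          · exact Finset.mem_union_left _ (Finset.mem_filter.2 ⟨hyU, hcc ▸ hd⟩)
          · refine Finset.mem_union_right _ ?_
            rw [hS', Finset.mem_filter, Finset.mem_sdiff]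
            exact ⟨⟨hyU, hyC⟩, c', Finset.mem_erase.2 ⟨hcc, hc'⟩, hd⟩
        have h1 : ∑ y ∈ S, ω y ≤ (∑ y ∈ S ∩ C, ω y) + ((∑ y ∈ B0, ω y) + ∑ y ∈ S', ω y) :=
          (Finset.sum_le_sum_of_subset hsub).trans
            ((sum_union_le' _ _ _).trans (by gcongr; exact sum_union_le' _ _ _))
        have hB0Bp : ∑ y ∈ B0, ω y ≤ ∑ y ∈ Bp, ω y := by
          rcases B0.eq_empty_or_nonempty with he | hne
          · simp [he]
          · exact hmax c₀ hne
        have hSC : (∑ y ∈ S ∩ C, ω y) + ∑ y ∈ Bp, ω y ≤ ∑ y ∈ C, ω y := by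
          have hdisj2 : Disjoint (S ∩ C) Bp := by
            rw [Finset.disjoint_left]
            intro y hy hyBp
            rw [Finset.mem_inter, hS, Finset.mem_filter] at hy
            obtain ⟨⟨hyU, c', hc', hd⟩, _⟩ := hy
            rw [hBp, Finset.mem_filter] at hyBp
            exact hdisj c' hc' y hyU hd hyBp.2
          calc (∑ y ∈ S ∩ C, ω y) + ∑ y ∈ Bp, ω y
              = ∑ y ∈ (S ∩ C) ∪ Bp, ω y := (Finset.sum_union hdisj2).symm
            _ ≤ ∑ y ∈ C, ω y := Finset.sum_le_sum_of_subset
                (Finset.union_subset Finset.inter_subset_right hBpC)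
        omega
    obtain ⟨c, hcCs, hle⟩ := key
    obtain ⟨m, hm⟩ : ∃ m, Cs.card = m + 1 :=
      ⟨Cs.card - 1, (Nat.succ_pred_eq_of_pos (Finset.card_pos.2 ⟨c₀, hc₀⟩)).symm⟩
    have hcard : (Cs.erase c).card = m := by
      rw [Finset.card_erase_of_mem hcCs, hm]; omega
    have htake : min Cs.card ((p, C) :: L).length = min m L.length + 1 := by
      simp [hm, List.length_cons, Nat.succ_min_succ]
    rw [htake, List.take_succ_cons, List.map_cons, List.sum_cons]
    refine hle.trans ?_
    gcongr
    have := ih (Cs.erase c)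
    rwa [hcard] at this

/-- (Charikar et al. greedy domination lemma.) If greedy clustering is run with
expansion parameter `γ ≥ 3`, then for any collection of `k ≥ 1` balls of radius
`r` with centers `Cs ⊆ X`, the total weight of the first `min k |M|` greedy
clusters is at least the total `ω`-weight of the points of `Y` covered by the
balls. -/
theorem greedy_domination {X : Type*} [MetricSpace X] {r γ : ℝ}
    (hr : 0 ≤ r) (hγ : 3 ≤ γ) (ω : X → ℕ) (Y : Finset X)
    (L : List (X × Finset X)) (hexec : GreedyExec r γ ω Y L)
    (Cs : Finset X) (hCs : 1 ≤ Cs.card) :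
    ∑ y ∈ Y.filter (fun y => ∃ c ∈ Cs, dist y c ≤ r), ω y ≤
      ((L.take (min Cs.card L.length)).map fun pc => ∑ y ∈ pc.2, ω y).sum := by
  exact greedy_key hr hγ ω hexec Cs
end

section
/- (Net-based reduction from (t+1)-NUkC to robust t-NUkC, easy direction) Let Y be a 2r-net of a finite metric space X: pairwise distances in Y exceed 2r, and every point of X is within 2r of some point of Y. Suppose X is covered by a collection of balls B₁,…,B_s of radii ρ₁,…,ρ_s together with k balls of radius r. Then at most k points of Y are uncovered by the enlarged balls B(φ(c_i), ρ_i + 2r) (where c_i is the center of B_i and φ maps each point to its nearest net point), i.e., the enlarged balls cover at least |Y| − k points of Y. -/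
open scoped Classical

/-- (Net-based reduction, easy direction.)  Let `Y` be a `2r`-net of `X` with
nearest-net-point map `φ`.  If `X` is covered by balls `B(c i, ρ i)` (for `i`
in a finite index set) together with balls of radius `r` centered at the points
of `K`, then the enlarged balls `B(φ (c i), ρ i + 2r)` cover all but at most
`|K|` points of `Y`. -/
theorem net_reduction_easy {X : Type*} [MetricSpace X] {r : ℝ} (hr : 0 ≤ r)
    (Y : Finset X)
    (hsep : ∀ u ∈ Y, ∀ v ∈ Y, u ≠ v → 2 * r < dist u v)
    (hnet : ∀ x : X, ∃ y ∈ Y, dist x y ≤ 2 * r)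
    (φ : X → X) (hφY : ∀ x : X, φ x ∈ Y) (hφ : ∀ x : X, dist x (φ x) ≤ 2 * r)
    {ι : Type*} [Fintype ι] (c : ι → X) (ρ : ι → ℝ) (K : Finset X)
    (hcov : ∀ x : X, (∃ i : ι, dist x (c i) ≤ ρ i) ∨ ∃ p ∈ K, dist x p ≤ r) :
    (Y.filter fun y => ¬ ∃ i : ι, dist y (φ (c i)) ≤ ρ i + 2 * r).card ≤
      K.card := by

  apply Finset.card_le_card_of_injOn
    (fun y => if h : ∃ p ∈ K, dist y p ≤ r then h.choose else y)
  · intro y hy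
    simp only [Finset.mem_coe, Finset.mem_filter] at hy
    obtain ⟨hyY, hnc⟩ := hy
    have hp : ∃ p ∈ K, dist y p ≤ r := by
      rcases hcov y with ⟨i, hi⟩ | hp
      · exact absurd ⟨i, by
          calc dist y (φ (c i)) ≤ dist y (c i) + dist (c i) (φ (c i)) := dist_triangle _ _ _
          _ ≤ ρ i + 2 * r := add_le_add hi (hφ (c i))⟩ hnc
      · exact hp
    simp only [hp, dif_pos]
    exact hp.choose_spec.1
  · intro y1 h1 y2 h2 heq
    simp only [Finset.mem_coe, Finset.mem_filter] at h1 h2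
    by_contra hne
    have hp1 : ∃ p ∈ K, dist y1 p ≤ r := by
      rcases hcov y1 with ⟨i, hi⟩ | hp
      · exact absurd ⟨i, by
          calc dist y1 (φ (c i)) ≤ dist y1 (c i) + dist (c i) (φ (c i)) := dist_triangle _ _ _
          _ ≤ ρ i + 2 * r := add_le_add hi (hφ (c i))⟩ h1.2
      · exact hp
    have hp2 : ∃ p ∈ K, dist y2 p ≤ r := by
      rcases hcov y2 with ⟨i, hi⟩ | hp
      · exact absurd ⟨i, by
          calc dist y2 (φ (c i)) ≤ dist y2 (c i) + dist (c i) (φ (c i)) := dist_triangle _ _ _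
          _ ≤ ρ i + 2 * r := add_le_add hi (hφ (c i))⟩ h2.2
      · exact hp
    simp only [hp1, hp2, dif_pos] at heq
    have hlt := hsep y1 h1.1 y2 h2.1 hne
    have : dist y1 y2 ≤ 2 * r := by
      calc dist y1 y2 ≤ dist y1 hp1.choose + dist hp1.choose y2 := dist_triangle _ _ _
      _ ≤ r + r := add_le_add hp1.choose_spec.2 (by rw [dist_comm, heq]; exact hp2.choose_spec.2)
      _ = 2 * r := by ring
    linarith
end

section
/- (Interleaved subsequence greedy equivalence) Let the greedy clustering algorithm on input (X, X, r, 3, ω) produce ordered centers p₁, p₂, … with clusters C(p_i). Let M₂ ⊆ M be a subset of centers, X₂ = ∪_{p∈M₂} C(p). Then running the greedy clustering algorithm on input (X₂, X, r, 3, ω) produces exactly the centers of M₂ in their original relative order, with the same clusters C(p) and weights wt(p). -/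
open scoped Classical

inductive GreedyExecTB {X : Type*} [MetricSpace X] [LinearOrder X]
    (r γ : ℝ) (ω : X → ℕ) : Finset X → List (X × Finset X) → Prop
  | nil : GreedyExecTB r γ ω ∅ []
  | cons (U : Finset X) (p : X) (L : List (X × Finset X))
      (hU : U.Nonempty)
      (hp : (U.filter fun y => dist y p ≤ r).Nonempty)
      (hmax : ∀ q : X, (U.filter fun y => dist y q ≤ r).Nonempty →
        ∑ y ∈ U.filter (fun y => dist y q ≤ r), ω y ≤
          ∑ y ∈ U.filter (fun y => dist y p ≤ r), ω y)
      (htb : ∀ q : X, (U.filter fun y => dist y q ≤ r).Nonempty →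
        ∑ y ∈ U.filter (fun y => dist y q ≤ r), ω y =
          ∑ y ∈ U.filter (fun y => dist y p ≤ r), ω y → p ≤ q)
      (hrest : GreedyExecTB r γ ω (U \ U.filter fun y => dist y p ≤ γ * r) L) :
      GreedyExecTB r γ ω U ((p, U.filter fun y => dist y p ≤ γ * r) :: L)

lemma GreedyExecTB.snd_subset {X : Type*} [MetricSpace X] [LinearOrder X]
    {r γ : ℝ} {ω : X → ℕ} {U : Finset X} {L : List (X × Finset X)}
    (h : GreedyExecTB r γ ω U L) : ∀ pc ∈ L, pc.2 ⊆ U := by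
  induction h with
  | nil => simp
  | cons U p L hU hp hmax htb hrest ih =>
    intro pc hpc
    rcases List.mem_cons.1 hpc with h1 | h1
    · subst h1; exact Finset.filter_subset _ _
    · exact (ih pc h1).trans Finset.sdiff_subset

lemma foldr_union_subset {α : Type*} [DecidableEq α] {l : List (Finset α)} {W : Finset α}
    (h : ∀ a ∈ l, a ⊆ W) : l.foldr (· ∪ ·) ∅ ⊆ W := by
  induction l with
  | nil => simp
  | cons a l ih =>
    simp only [List.foldr_cons]
    exact Finset.union_subset (h a (by simp)) (ih fun b hb => h b (by simp [hb]))

lemma key {X : Type*} [MetricSpace X] [LinearOrder X] {r : ℝ} (hr : 0 ≤ r) (ω : X → ℕ)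
    {U : Finset X} {L : List (X × Finset X)}
    (hexec : GreedyExecTB r 3 ω U L) (S : Finset X) :
    GreedyExecTB r 3 ω
      (((L.filter fun pc => pc.1 ∈ S).map Prod.snd).foldr (· ∪ ·) ∅)
      (L.filter fun pc => pc.1 ∈ S) := by
  induction hexec with
  | nil => simpa using GreedyExecTB.nil
  | cons U p L hU hp hmax htb hrest ih =>
    by_cases hpS : p ∈ S
    · set C : Finset X := U.filter fun y => dist y p ≤ 3 * r with hC
      set V' : Finset X :=
        ((L.filter fun pc => pc.1 ∈ S).map Prod.snd).foldr (· ∪ ·) ∅ with hV'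
      have hlist : ((p, C) :: L).filter (fun pc => pc.1 ∈ S) =
          (p, C) :: (L.filter fun pc => pc.1 ∈ S) := by
        simp [List.filter_cons, hpS]
      rw [hlist]
      have hfold : (((p, C) :: L.filter fun pc => pc.1 ∈ S).map Prod.snd).foldr (· ∪ ·) ∅
          = C ∪ V' := by simp [hV']
      rw [hfold]
      -- basic subsets
      have hV'sub : V' ⊆ U \ C := by
        apply foldr_union_subset
        intro a ha
        obtain ⟨pc, hpc, rfl⟩ := List.mem_map.1 ha
        exact hrest.snd_subset pc (List.mem_of_mem_filter hpc)
      have hCU : C ⊆ U := Finset.filter_subset _ _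
      have hVU : C ∪ V' ⊆ U :=
        Finset.union_subset hCU (hV'sub.trans Finset.sdiff_subset)
      have hCV : C ⊆ C ∪ V' := Finset.subset_union_left
      -- r-ball filter equality at p
      have hr3 : ∀ y : X, dist y p ≤ r → dist y p ≤ 3 * r := fun y hy => by linarith
      have hfr : (C ∪ V').filter (fun y => dist y p ≤ r) =
          U.filter (fun y => dist y p ≤ r) := by
        apply Finset.Subset.antisymm (Finset.filter_subset_filter _ hVU)
        intro x hx
        rw [Finset.mem_filter] at hx ⊢
        exact ⟨hCV (Finset.mem_filter.2 ⟨hx.1, hr3 x hx.2⟩), hx.2⟩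
      -- 3r-ball filter equality at p
      have hf3 : (C ∪ V').filter (fun y => dist y p ≤ 3 * r) = C := by
        apply Finset.Subset.antisymm
        · exact (Finset.filter_subset_filter _ hVU).trans (by rw [hC])
        · intro x hx
          have hx' := hx
          rw [hC, Finset.mem_filter] at hx'
          exact Finset.mem_filter.2 ⟨hCV hx, hx'.2⟩
      have hsub_q : ∀ q : X, (C ∪ V').filter (fun y => dist y q ≤ r) ⊆
          U.filter (fun y => dist y q ≤ r) := fun q => Finset.filter_subset_filter _ hVU
      have hsum_le : ∀ q : X, ∑ y ∈ (C ∪ V').filter (fun y => dist y q ≤ r), ω y ≤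
          ∑ y ∈ U.filter (fun y => dist y q ≤ r), ω y := fun q =>
        Finset.sum_le_sum_of_subset (hsub_q q)
      have hdisj : Disjoint C V' :=
        (Finset.sdiff_disjoint.symm.mono_right hV'sub : Disjoint C V')
      have hmain := GreedyExecTB.cons (r := r) (γ := 3) (ω := ω) (C ∪ V') p (L.filter fun pc => pc.1 ∈ S) ?_ ?_ ?_ ?_ ?_
      · rwa [hf3] at hmain
      · obtain ⟨y, hy⟩ := hp
        rw [Finset.mem_filter] at hy
        exact ⟨y, hCV (Finset.mem_filter.2 ⟨hy.1, hr3 y hy.2⟩)⟩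
      · rw [hfr]; exact hp
      · intro q hq
        rw [hfr]
        exact (hsum_le q).trans (hmax q ((hq.mono (hsub_q q))))
      · intro q hq heq
        rw [hfr] at heq
        have h1 := hsum_le q
        have h2 := hmax q (hq.mono (hsub_q q))
        exact htb q (hq.mono (hsub_q q)) (le_antisymm h2 (heq ▸ h1))
      · rw [hf3, Finset.union_sdiff_cancel_left hdisj]
        exact ih
    · have hlist : ((p, U.filter fun y => dist y p ≤ 3 * r) :: L).filter
          (fun pc => pc.1 ∈ S) = L.filter fun pc => pc.1 ∈ S := by
        simp [List.filter_cons, hpS]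
      rw [hlist]
      exact ih

/-- (Interleaved subsequence greedy equivalence.)  Let the greedy clustering
algorithm with consistent tie-breaking, run on input `(X, X, r, 3, ω)`, produce
the ordered list `L` of (center, cluster) pairs.  For any subset `S` of centers
(defining `M₂ = {centers of L} ∩ S` and `X₂ = ∪_{p ∈ M₂} C p`), running the
same greedy algorithm on input `(X₂, X, r, 3, ω)` produces exactly the centers
of `M₂` in their original relative order, with the same clusters and hence the
same weights. -/
theorem greedy_subsequence_equivalence {X : Type*} [MetricSpace X]
    [LinearOrder X] [Fintype X] {r : ℝ} (hr : 0 ≤ r) (ω : X → ℕ)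
    (L : List (X × Finset X))
    (hexec : GreedyExecTB r 3 ω Finset.univ L) (S : Finset X) :
    GreedyExecTB r 3 ω
      (((L.filter fun pc => pc.1 ∈ S).map Prod.snd).foldr (· ∪ ·) ∅)
      (L.filter fun pc => pc.1 ∈ S) := by
  exact key hr ω hexec S
end
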